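/- Specializing the two-variable identity at x=q: ∑_{n₁,n₂ ≥ 0} q^{(3n₁²+n₁)/2 + 4n₁n₂ + 4n₂² + 2n₂} / ((q;q)_{n₁}(q²;q²)_{n₂}) = ∑_{n≥0} q^{n²+n}/(q;q)_n, as formal power series in q. -/

import Mathlib

open Finset

/-- `(q;q)_n = ∏_{i=1}^n (1 - q^i)`. -/
noncomputable def qFac (q : ℂ) (n : ℕ) : ℂ :=
  ∏ i ∈ Finset.range n, (1 - q ^ (i + 1))

/-- Triangular numbers: `eTri n = n(n-1)/2`. -/
def eTri : ℕ → ℕ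
  | 0 => 0
  | n + 1 => eTri n + n

lemma eTri_succ (n : ℕ) : eTri (n + 1) = eTri n + n := rfl

lemma two_eTri (n : ℕ) : 2 * eTri n + n = n * n := by
  induction n with
  | zero => rfl
  | succ k ih =>
      have h : (k + 1) * (k + 1) = k * k + (2 * k + 1) := by ring
      rw [eTri_succ, h]
      linarith

lemma expo_eq (m j : ℕ) :
    (3 * m ^ 2 + m) / 2 + 4 * m * j + 4 * j ^ 2 + 2 * j
      = ((m + 2 * j) ^ 2 + (m + 2 * j)) + eTri m := by
  have hdvd : 2 ∣ 3 * m ^ 2 + m := by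
    rcases Nat.even_or_odd m with ⟨c, hc⟩ | ⟨c, hc⟩
    · exact ⟨6 * c ^ 2 + c, by subst hc; ring⟩
    · exact ⟨6 * c ^ 2 + 7 * c + 2, by subst hc; ring⟩
  obtain ⟨k, hk⟩ := hdvd
  rw [hk, Nat.mul_div_cancel_left _ (by norm_num)]
  have h2 := two_eTri m
  apply Nat.eq_of_mul_eq_mul_left (show 0 < 2 by norm_num)
  zify at hk h2 ⊢
  linear_combination -hk - h2

lemma qFac_zero (q : ℂ) : qFac q 0 = 1 := rfl

lemma qFac_succ (q : ℂ) (n : ℕ) : qFac q (n + 1) = qFac q n * (1 - q ^ (n + 1)) :=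
  Finset.prod_range_succ _ _

lemma one_sub_pow_ne (q : ℂ) (hq : ‖q‖ < 1) (k : ℕ) : (1 : ℂ) - q ^ (k + 1) ≠ 0 := by
  intro h
  have h1 : q ^ (k + 1) = 1 := by linear_combination -h
  have : ‖q ^ (k + 1)‖ < 1 := by
    rw [norm_pow]
    exact pow_lt_one₀ (norm_nonneg q) hq (Nat.succ_ne_zero k)
  rw [h1, norm_one] at this
  exact lt_irrefl _ this

lemma qFac_ne_zero (q : ℂ) (hq : ‖q‖ < 1) (n : ℕ) : qFac q n ≠ 0 := by
  apply Finset.prod_ne_zero_iff.2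
  intro i _
  exact one_sub_pow_ne q hq i

/-- summand of `T`. -/
noncomputable def tT (q : ℂ) (n j : ℕ) : ℂ :=
  if 2 * j ≤ n then q ^ eTri (n - 2 * j) / (qFac q (n - 2 * j) * qFac (q ^ 2) j) else 0

/-- summand of `U`. -/
noncomputable def uU (q : ℂ) (n j : ℕ) : ℂ :=
  if 2 * j ≤ n then
    q ^ (eTri (n - 2 * j) + (n - 2 * j)) / (qFac q (n - 2 * j) * qFac (q ^ 2) j) else 0

noncomputable def TT (q : ℂ) (n : ℕ) : ℂ := ∑ j ∈ range (n + 1), tT q n j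

noncomputable def UU (q : ℂ) (n : ℕ) : ℂ := ∑ j ∈ range (n + 1), uU q n j

lemma alg1 (P Q x a : ℂ) (hP : P ≠ 0) (hQ : Q ≠ 0) (hx : 1 - x ≠ 0) :
    a / (P * (1 - x) * Q) = a * x / (P * (1 - x) * Q) + a / (P * Q) := by
  field_simp
  ring

lemma tT_split (q : ℂ) (hq : ‖q‖ < 1) (n j : ℕ) :
    tT q (n + 1) j = uU q (n + 1) j + uU q n j := by
  have hq2 : ‖q ^ 2‖ < 1 := by
    rw [norm_pow]
    exact pow_lt_one₀ (norm_nonneg q) hq (by norm_num)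
  by_cases h : 2 * j ≤ n
  · have h1 : 2 * j ≤ n + 1 := by omega
    have h2 : n + 1 - 2 * j = (n - 2 * j) + 1 := by omega
    rw [tT, uU, uU, if_pos h1, if_pos h1, if_pos h, h2]
    set m := n - 2 * j with hm
    have hP : qFac q m ≠ 0 := qFac_ne_zero q hq m
    have hP1 : (1 : ℂ) - q ^ (m + 1) ≠ 0 := one_sub_pow_ne q hq m
    have hQ : qFac (q ^ 2) j ≠ 0 := qFac_ne_zero _ hq2 j
    rw [eTri_succ, qFac_succ, pow_add (q) (eTri m + m) (m + 1)]
    exact alg1 _ _ _ _ hP hQ hP1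
  · by_cases h1 : 2 * j ≤ n + 1
    · have h0 : n + 1 - 2 * j = 0 := by omega
      rw [tT, uU, uU, if_pos h1, if_pos h1, if_neg h, h0]
      simp [eTri]
    · rw [tT, uU, uU, if_neg h1, if_neg h1, if_neg h]
      simp

lemma TT_succ_eq (q : ℂ) (hq : ‖q‖ < 1) (n : ℕ) :
    TT q (n + 1) = UU q (n + 1) + UU q n := by
  unfold TT UU
  calc ∑ j ∈ range (n + 2), tT q (n + 1) j
      = ∑ j ∈ range (n + 2), (uU q (n + 1) j + uU q n j) :=
        Finset.sum_congr rfl fun j _ => tT_split q hq n j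
    _ = ∑ j ∈ range (n + 2), uU q (n + 1) j + ∑ j ∈ range (n + 2), uU q n j :=
        Finset.sum_add_distrib
    _ = ∑ j ∈ range (n + 2), uU q (n + 1) j + ∑ j ∈ range (n + 1), uU q n j := by
        rw [Finset.sum_range_succ (fun j => uU q n j) (n + 1)]
        have : uU q n (n + 1) = 0 := by rw [uU, if_neg (by omega)]
        rw [this, add_zero]

lemma alg3 (P Q x y a : ℂ) (hP : P ≠ 0) (hQ : Q ≠ 0) (hx : 1 - x ≠ 0) (hy : 1 - y ≠ 0) :
    (1 - x * y) * (a / (P * (1 - x) * (Q * (1 - y))))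
      = a / (P * (Q * (1 - y))) + a * x / (P * (1 - x) * Q) := by
  field_simp
  ring

lemma tT_split2 (q : ℂ) (hq : ‖q‖ < 1) (n j : ℕ) :
    (1 - q ^ (n + 2)) * tT q (n + 2) j
      = uU q (n + 1) j + (if j = 0 then 0 else uU q n (j - 1)) := by
  have hq2 : ‖q ^ 2‖ < 1 := by
    rw [norm_pow]
    exact pow_lt_one₀ (norm_nonneg q) hq (by norm_num)
  rcases j with _ | j'
  · -- j = 0
    rw [if_pos rfl, add_zero]
    simp only [tT, uU]
    rw [if_pos (show 2 * 0 ≤ n + 2 by omega), if_pos (show 2 * 0 ≤ n + 1 by omega)]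
    simp only [Nat.mul_zero, Nat.sub_zero]
    rw [eTri_succ, qFac_succ q (n + 1)]
    have hP : qFac q (n + 1) ≠ 0 := qFac_ne_zero q hq _
    have hx : (1 : ℂ) - q ^ (n + 2) ≠ 0 := one_sub_pow_ne q hq (n + 1)
    have hQ : qFac (q ^ 2) 0 ≠ 0 := qFac_ne_zero _ hq2 0
    field_simp
  · -- j = j' + 1
    rw [if_neg (Nat.succ_ne_zero j'), Nat.add_sub_cancel]
    by_cases hle : 2 * j' + 1 ≤ n
    · obtain ⟨m', rfl⟩ : ∃ m', n = m' + 1 + 2 * j' := ⟨n - (1 + 2 * j'), by omega⟩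
      simp only [tT, uU]
      rw [if_pos (show 2 * (j' + 1) ≤ m' + 1 + 2 * j' + 2 by omega),
        if_pos (show 2 * (j' + 1) ≤ m' + 1 + 2 * j' + 1 by omega),
        if_pos (show 2 * j' ≤ m' + 1 + 2 * j' by omega)]
      have e1 : m' + 1 + 2 * j' + 2 - 2 * (j' + 1) = m' + 1 := by omega
      have e2 : m' + 1 + 2 * j' + 1 - 2 * (j' + 1) = m' := by omega
      have e3 : m' + 1 + 2 * j' - 2 * j' = m' + 1 := by omega
      rw [e1, e2, e3]
      have hxy : q ^ (m' + 1 + 2 * j' + 2) = q ^ (m' + 1) * (q ^ 2) ^ (j' + 1) := by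
        have eexp : m' + 1 + 2 * j' + 2 = (m' + 1) + 2 * (j' + 1) := by omega
        rw [eexp, pow_add, pow_mul]
      rw [hxy, eTri_succ, qFac_succ q m', qFac_succ (q ^ 2) j',
        pow_add q (eTri m' + m') (m' + 1)]
      exact alg3 _ _ _ _ _ (qFac_ne_zero q hq m') (qFac_ne_zero _ hq2 j')
        (one_sub_pow_ne q hq m') (one_sub_pow_ne (q ^ 2) hq2 j')
    · by_cases heq : n = 2 * j'
      · subst heq
        simp only [tT, uU]
        rw [if_pos (show 2 * (j' + 1) ≤ 2 * j' + 2 by omega),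
          if_neg (show ¬ 2 * (j' + 1) ≤ 2 * j' + 1 by omega),
          if_pos (show 2 * j' ≤ 2 * j' by omega)]
        have e1 : 2 * j' + 2 - 2 * (j' + 1) = 0 := by omega
        have e2 : 2 * j' - 2 * j' = 0 := by omega
        rw [e1, e2]
        have hxy : q ^ (2 * j' + 2) = (q ^ 2) ^ (j' + 1) := by
          have eexp : 2 * j' + 2 = 2 * (j' + 1) := by omega
          rw [eexp, pow_mul]
        rw [hxy, qFac_succ (q ^ 2) j']
        have hQ : qFac (q ^ 2) j' ≠ 0 := qFac_ne_zero _ hq2 j'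
        have hy : (1 : ℂ) - (q ^ 2) ^ (j' + 1) ≠ 0 := one_sub_pow_ne (q ^ 2) hq2 j'
        simp only [eTri, qFac_zero, one_mul, pow_zero, Nat.add_zero, zero_add]
        field_simp
      · simp only [tT, uU]
        rw [if_neg (show ¬ 2 * (j' + 1) ≤ n + 2 by omega),
          if_neg (show ¬ 2 * (j' + 1) ≤ n + 1 by omega),
          if_neg (show ¬ 2 * j' ≤ n by omega)]
        simp

lemma TT_rec (q : ℂ) (hq : ‖q‖ < 1) (n : ℕ) :
    (1 - q ^ (n + 2)) * TT q (n + 2) = UU q (n + 1) + UU q n := by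
  unfold TT UU
  rw [Finset.mul_sum]
  calc ∑ j ∈ range (n + 3), (1 - q ^ (n + 2)) * tT q (n + 2) j
      = ∑ j ∈ range (n + 3), (uU q (n + 1) j + if j = 0 then 0 else uU q n (j - 1)) :=
        Finset.sum_congr rfl fun j _ => tT_split2 q hq n j
    _ = ∑ j ∈ range (n + 3), uU q (n + 1) j
        + ∑ j ∈ range (n + 3), (if j = 0 then 0 else uU q n (j - 1)) :=
        Finset.sum_add_distrib
    _ = ∑ j ∈ range (n + 2), uU q (n + 1) j + ∑ j ∈ range (n + 1), uU q n j := by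
        congr 1
        · rw [Finset.sum_range_succ]
          have : uU q (n + 1) (n + 2) = 0 := by rw [uU, if_neg (by omega)]
          rw [this, add_zero]
        · rw [Finset.sum_range_succ' (fun j => if j = 0 then 0 else uU q n (j - 1)) (n + 2)]
          simp only [Nat.succ_ne_zero, if_false, if_true, ite_false, ite_true,
            Nat.add_sub_cancel, add_zero]
          rw [Finset.sum_range_succ]
          have h0 : uU q n (n + 1) = 0 := by rw [uU, if_neg (by omega)]
          rw [h0, add_zero]

lemma qFac_mul_TT (q : ℂ) (hq : ‖q‖ < 1) (n : ℕ) : qFac q n * TT q n = 1 := by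
  have key : ∀ n : ℕ, qFac q n * TT q n = 1 ∧ qFac q (n + 1) * TT q (n + 1) = 1 := by
    intro n
    induction n with
    | zero =>
      constructor
      · simp [TT, tT, qFac_zero, eTri]
      · have h := one_sub_pow_ne q hq 0
        rw [TT, Finset.sum_range_succ, Finset.sum_range_succ, Finset.sum_range_zero]
        rw [tT, tT, if_pos (by omega), if_neg (by omega)]
        simp only [Nat.sub_zero, eTri, pow_zero, qFac_zero, mul_one, zero_add, add_zero]
        rw [qFac_succ, qFac_zero, one_mul]
        rw [mul_one_div]
        exact div_self h
    | succ k ih =>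
      refine ⟨ih.2, ?_⟩
      have hrec : (1 - q ^ (k + 2)) * TT q (k + 2) = TT q (k + 1) := by
        rw [TT_rec q hq k, ← TT_succ_eq q hq k]
      calc qFac q (k + 2) * TT q (k + 2)
          = qFac q (k + 1) * ((1 - q ^ (k + 2)) * TT q (k + 2)) := by
            rw [qFac_succ q (k + 1)]; ring
        _ = qFac q (k + 1) * TT q (k + 1) := by rw [hrec]
        _ = 1 := ih.2
  exact (key n).1

lemma aux_summable (r : ℝ) (hr0 : 0 ≤ r) (hr1 : r < 1) (e : ℕ → ℕ)
    (he : ∀ m, e m + m + 1 ≤ e (m + 1)) :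
    Summable (fun m : ℕ => r ^ e m / (1 - r) ^ m) := by
  have h1r : (0 : ℝ) < 1 - r := by linarith
  obtain ⟨N, hN⟩ : ∃ N : ℕ, r ^ (N + 1) ≤ (1 - r) / 2 := by
    obtain ⟨n, hn⟩ := exists_pow_lt_of_lt_one (show (0 : ℝ) < (1 - r) / 2 by positivity) hr1
    exact ⟨n, le_trans (pow_le_pow_of_le_one hr0 hr1.le (Nat.le_succ n)) hn.le⟩
  apply summable_of_ratio_norm_eventually_le (r := 1 / 2) (by norm_num)
  filter_upwards [Filter.eventually_ge_atTop N] with m hm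
  have key : r ^ e (m + 1) ≤ r ^ e m * ((1 - r) / 2) := by
    calc r ^ e (m + 1) ≤ r ^ (e m + (m + 1)) :=
          pow_le_pow_of_le_one hr0 hr1.le (by have := he m; omega)
      _ = r ^ e m * r ^ (m + 1) := pow_add r _ _
      _ ≤ r ^ e m * r ^ (N + 1) :=
          mul_le_mul_of_nonneg_left (pow_le_pow_of_le_one hr0 hr1.le (by omega))
            (pow_nonneg hr0 _)
      _ ≤ r ^ e m * ((1 - r) / 2) :=
          mul_le_mul_of_nonneg_left hN (pow_nonneg hr0 _)
  calc ‖r ^ e (m + 1) / (1 - r) ^ (m + 1)‖ = r ^ e (m + 1) / (1 - r) ^ (m + 1) := by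
        rw [Real.norm_eq_abs, abs_of_nonneg (by positivity)]
    _ ≤ (r ^ e m * ((1 - r) / 2)) / (1 - r) ^ (m + 1) := by gcongr
    _ = (1 / 2) * (r ^ e m / (1 - r) ^ m) := by
        field_simp
        ring
    _ = (1 / 2) * ‖r ^ e m / (1 - r) ^ m‖ := by
        rw [Real.norm_eq_abs, abs_of_nonneg (by positivity)]

lemma qFac_norm_ge (q : ℂ) (hq : ‖q‖ < 1) (n : ℕ) : (1 - ‖q‖) ^ n ≤ ‖qFac q n‖ := by
  induction n with
  | zero => simp [qFac_zero]
  | succ k ih =>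
    rw [qFac_succ, norm_mul, pow_succ]
    have h1 : 1 - ‖q‖ ≤ ‖1 - q ^ (k + 1)‖ := by
      have h2 := norm_sub_norm_le (1 : ℂ) (q ^ (k + 1))
      rw [norm_one, norm_pow] at h2
      have hp : ‖q‖ ^ (k + 1) ≤ ‖q‖ ^ 1 :=
        pow_le_pow_of_le_one (norm_nonneg q) hq.le (by omega)
      rw [pow_one] at hp
      linarith
    exact mul_le_mul ih h1 (by linarith) (norm_nonneg _)


noncomputable def fF (q : ℂ) (p : ℕ × ℕ) : ℂ :=
  q ^ ((3 * p.1 ^ 2 + p.1) / 2 + 4 * p.1 * p.2 + 4 * p.2 ^ 2 + 2 * p.2) /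
    (qFac q p.1 * qFac (q ^ 2) p.2)

noncomputable def gG (q : ℂ) (p : ℕ × ℕ) : ℂ :=
  if 2 * p.2 ≤ p.1 then fF q (p.1 - 2 * p.2, p.2) else 0

def iI (p : ℕ × ℕ) : ℕ × ℕ := (p.1 + 2 * p.2, p.2)

lemma fF_norm_le (q : ℂ) (hq : ‖q‖ < 1) (p : ℕ × ℕ) : ‖fF q p‖ ≤
    (‖q‖ ^ ((3 * p.1 ^ 2 + p.1) / 2) / (1 - ‖q‖) ^ p.1) *
      (‖q‖ ^ (4 * p.2 ^ 2 + 2 * p.2) / (1 - ‖q‖) ^ p.2) := by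
  have hr0 : (0 : ℝ) ≤ ‖q‖ := norm_nonneg q
  have h1r : (0 : ℝ) < 1 - ‖q‖ := by linarith
  have hq2 : ‖q ^ 2‖ < 1 := by
    rw [norm_pow]
    exact pow_lt_one₀ hr0 hq (by norm_num)
  obtain ⟨m, j⟩ := p
  rw [fF]
  simp only
  rw [norm_div, norm_mul, norm_pow]
  rw [div_mul_div_comm]
  apply div_le_div₀ (by positivity) ?_ (by positivity) ?_
  · have hassoc : (3 * m ^ 2 + m) / 2 + 4 * m * j + 4 * j ^ 2 + 2 * j
        = ((3 * m ^ 2 + m) / 2 + 4 * m * j) + (4 * j ^ 2 + 2 * j) := by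
      omega
    rw [hassoc, pow_add, pow_add]
    have h4 : ‖q‖ ^ (4 * m * j) ≤ 1 := pow_le_one₀ hr0 hq.le
    calc ‖q‖ ^ ((3 * m ^ 2 + m) / 2) * ‖q‖ ^ (4 * m * j) * ‖q‖ ^ (4 * j ^ 2 + 2 * j)
        ≤ ‖q‖ ^ ((3 * m ^ 2 + m) / 2) * 1 * ‖q‖ ^ (4 * j ^ 2 + 2 * j) := by
          apply mul_le_mul_of_nonneg_right _ (by positivity)
          exact mul_le_mul_of_nonneg_left h4 (by positivity)
      _ = ‖q‖ ^ ((3 * m ^ 2 + m) / 2) * ‖q‖ ^ (4 * j ^ 2 + 2 * j) := by ring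
  · have hq2q : 1 - ‖q‖ ≤ 1 - ‖q ^ 2‖ := by
      rw [norm_pow]
      nlinarith
    have hj : (1 - ‖q‖) ^ j ≤ ‖qFac (q ^ 2) j‖ :=
      le_trans (pow_le_pow_left₀ h1r.le hq2q j) (qFac_norm_ge (q ^ 2) hq2 j)
    exact mul_le_mul (qFac_norm_ge q hq m) hj (by positivity) (norm_nonneg _)

lemma gG_iI (q : ℂ) (p : ℕ × ℕ) : gG q (iI p) = fF q p := by
  obtain ⟨m, j⟩ := p
  rw [gG, iI]
  simp only
  rw [if_pos (show 2 * j ≤ m + 2 * j by omega)]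
  have hmj : m + 2 * j - 2 * j = m := by omega
  rw [hmj]

lemma iI_inj : Function.Injective iI := by
  intro a b hab
  have h1 : (iI a).1 = (iI b).1 := by rw [hab]
  have h2 : (iI a).2 = (iI b).2 := by rw [hab]
  rw [iI, iI] at h1 h2
  simp only at h1 h2
  exact Prod.ext (by omega) (by omega)

lemma gG_supp (q : ℂ) : ∀ p ∉ Set.range iI, gG q p = 0 := by
  rintro ⟨n, j⟩ hp
  by_contra hne
  apply hp
  have hle : 2 * j ≤ n := by
    by_contra hle
    exact hne (by rw [gG]; exact if_neg hle)
  refine ⟨(n - 2 * j, j), ?_⟩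
  rw [iI]
  simp only
  exact Prod.ext (by omega) rfl

set_option maxHeartbeats 1000000 in
theorem double_sum_RR_q (q : ℂ) (hq : ‖q‖ < 1) :
    ∑' n : ℕ × ℕ,
        q ^ ((3 * n.1 ^ 2 + n.1) / 2 + 4 * n.1 * n.2 + 4 * n.2 ^ 2 + 2 * n.2) /
          (qFac q n.1 * qFac (q ^ 2) n.2) =
      ∑' n : ℕ, q ^ (n ^ 2 + n) / qFac q n := by
  have hr0 : (0 : ℝ) ≤ ‖q‖ := norm_nonneg q
  have h1r : (0 : ℝ) < 1 - ‖q‖ := by linarith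
  have hA : ∀ m : ℕ, (3 * m ^ 2 + m) / 2 = m ^ 2 + m + eTri m := by
    intro m
    have h := expo_eq m 0
    simpa using h
  have ha : Summable (fun m : ℕ => ‖q‖ ^ ((3 * m ^ 2 + m) / 2) / (1 - ‖q‖) ^ m) := by
    apply aux_summable _ hr0 hq
    intro m
    rw [hA, hA, eTri_succ]
    have hexp : (m + 1) ^ 2 = m ^ 2 + 2 * m + 1 := by ring
    rw [hexp]
    linarith
  have hb : Summable (fun j : ℕ => ‖q‖ ^ (4 * j ^ 2 + 2 * j) / (1 - ‖q‖) ^ j) := by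
    apply aux_summable _ hr0 hq
    intro j
    have hexp : (j + 1) ^ 2 = j ^ 2 + 2 * j + 1 := by ring
    rw [hexp]
    linarith [Nat.zero_le j]
  have hprod : Summable (fun p : ℕ × ℕ =>
      (‖q‖ ^ ((3 * p.1 ^ 2 + p.1) / 2) / (1 - ‖q‖) ^ p.1) *
        (‖q‖ ^ (4 * p.2 ^ 2 + 2 * p.2) / (1 - ‖q‖) ^ p.2)) :=
    ha.mul_of_nonneg hb (fun m => by positivity) (fun j => by positivity)
  have hsumf : Summable (fF q) := Summable.of_norm_bounded hprod (fF_norm_le q hq)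
  have key1 : ∑' p : ℕ × ℕ, fF q p = ∑' p : ℕ × ℕ, gG q p := by
    rw [← iI_inj.tsum_eq (Function.support_subset_iff'.mpr (gG_supp q))]
    exact tsum_congr fun p => (gG_iI q p).symm
  have hsumg : Summable (gG q) := by
    rw [← iI_inj.summable_iff (gG_supp q)]
    exact hsumf.congr fun p => (gG_iI q p).symm
  have key2 : ∑' p : ℕ × ℕ, gG q p = ∑' (n : ℕ) (j : ℕ), gG q (n, j) := hsumg.tsum_prod
  have key3 : ∀ n : ℕ, ∑' j : ℕ, gG q (n, j) = q ^ (n ^ 2 + n) / qFac q n := by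
    intro n
    rw [tsum_eq_sum (s := range (n + 1))
      (fun j hj => by
        rw [gG]
        exact if_neg (by simp only [Finset.mem_range] at hj; omega))]
    have hterm : ∀ j, gG q (n, j) = q ^ (n ^ 2 + n) * tT q n j := by
      intro j
      by_cases hj : 2 * j ≤ n
      · rw [gG]
        simp only
        rw [if_pos hj, tT, if_pos hj, fF]
        simp only
        have hE := expo_eq (n - 2 * j) j
        have hn : (n - 2 * j) + 2 * j = n := by omega
        rw [hn] at hE
        rw [hE, pow_add, mul_div_assoc]
      · rw [gG]
        simp only
        rw [if_neg hj, tT, if_neg hj, mul_zero]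
    rw [Finset.sum_congr rfl fun j _ => hterm j, ← Finset.mul_sum]
    have hmul := qFac_mul_TT q hq n
    have hTT : TT q n = 1 / qFac q n :=
      eq_one_div_of_mul_eq_one_left (by rwa [mul_comm] at hmul)
    rw [show (∑ j ∈ range (n + 1), tT q n j) = TT q n from rfl, hTT, mul_one_div]
  have hlhs : (∑' n : ℕ × ℕ,
      q ^ ((3 * n.1 ^ 2 + n.1) / 2 + 4 * n.1 * n.2 + 4 * n.2 ^ 2 + 2 * n.2) /
        (qFac q n.1 * qFac (q ^ 2) n.2)) = ∑' p : ℕ × ℕ, fF q p := rfl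
  rw [hlhs, key1, key2]
  exact tsum_congr key3
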